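/- Let h : [t₀,∞) → ℝ be continuous, piecewise continuously differentiable with finitely many breakpoints t₀ < s₁ < ... < s_k, satisfying on each smooth piece h'(t) ≥ -γ sign(h(t)) |h(t)|^ρ with γ > 0, ρ ∈ [0,1). If h(t₀) ≥ 0 then h(t) ≥ 0 for all t ≥ t₀. -/
import Mathlib

/-- If `f` is continuous on `[a,b]` and has nonnegative derivative on `(a,b)`,
then `f a ≤ f b`. -/
lemma mono0_aux (f : ℝ → ℝ) (a b : ℝ) (hab : a ≤ b)
    (hc : ContinuousOn f (Set.Icc a b))
    (hd : ∀ x ∈ Set.Ioo a b, DifferentiableAt ℝ f x ∧ 0 ≤ deriv f x) :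
    f a ≤ f b := by
  have hm : MonotoneOn f (Set.Icc a b) := by
    apply monotoneOn_of_deriv_nonneg (convex_Icc a b) hc
    · intro x hx
      rw [interior_Icc] at hx
      exact (hd x hx).1.differentiableWithinAt
    · intro x hx
      rw [interior_Icc] at hx
      exact (hd x hx).2
  exact hm (Set.left_mem_Icc.2 hab) (Set.right_mem_Icc.2 hab) hab

/-- Monotonicity with finitely many exceptional points. -/
lemma mono_except_aux : ∀ (n : ℕ) (T : Finset ℝ), T.card ≤ n →
    ∀ (f : ℝ → ℝ) (a b : ℝ), a ≤ b →
    ContinuousOn f (Set.Icc a b) →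
    (∀ x ∈ Set.Ioo a b, x ∉ T → DifferentiableAt ℝ f x ∧ 0 ≤ deriv f x) →
    f a ≤ f b := by
  intro n
  induction n with
  | zero =>
    intro T hT f a b hab hc hd
    have hT0 : T = ∅ := Finset.card_eq_zero.1 (Nat.le_zero.1 hT)
    exact mono0_aux f a b hab hc fun x hx => hd x hx (by simp [hT0])
  | succ n ih =>
    intro T hT f a b hab hc hd
    by_cases hex : ∃ c ∈ T, c ∈ Set.Ioo a b
    · obtain ⟨c, hcT, hcab⟩ := hex
      have hcard : (T.erase c).card ≤ n := by
        rw [Finset.card_erase_of_mem hcT]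
        omega
      have h1 : f a ≤ f c := by
        apply ih (T.erase c) hcard f a c hcab.1.le
          (hc.mono (Set.Icc_subset_Icc le_rfl hcab.2.le))
        intro x hx hxT
        have hxne : x ≠ c := ne_of_lt hx.2
        have : x ∉ T := fun hxInT => hxT (Finset.mem_erase.2 ⟨hxne, hxInT⟩)
        exact hd x ⟨hx.1, hx.2.trans hcab.2⟩ this
      have h2 : f c ≤ f b := by
        apply ih (T.erase c) hcard f c b hcab.2.le
          (hc.mono (Set.Icc_subset_Icc hcab.1.le le_rfl))
        intro x hx hxT
        have hxne : x ≠ c := (ne_of_gt hx.1)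
        have : x ∉ T := fun hxInT => hxT (Finset.mem_erase.2 ⟨hxne, hxInT⟩)
        exact hd x ⟨hcab.1.trans hx.1, hx.2⟩ this
      exact h1.trans h2
    · push_neg at hex
      exact mono0_aux f a b hab hc fun x hx =>
        hd x hx (fun hxT => hex x hxT hx)

/-- Forward invariance of the barrier inequality for piecewise-C¹ trajectories:
if `h` is continuous on `[t₀,∞)` and satisfies the FCBF differential inequality
away from finitely many breakpoints, then `h(t₀) ≥ 0` implies `h(t) ≥ 0` for
all `t ≥ t₀`. -/
theorem stmt_16 (h : ℝ → ℝ) (t₀ γ ρ : ℝ) (k : ℕ) (s : Fin k → ℝ)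
    (hγ : 0 < γ) (hρ0 : 0 ≤ ρ) (hρ1 : ρ < 1)
    (hs : StrictMono s) (hs0 : ∀ i, t₀ < s i)
    (hcont : ContinuousOn h (Set.Ici t₀))
    (hdiff : ∀ t, t₀ ≤ t → (∀ i, t ≠ s i) →
      DifferentiableAt ℝ h t ∧
      deriv h t ≥ -γ * Real.sign (h t) * |h t| ^ ρ)
    (h0 : 0 ≤ h t₀) :
    ∀ t, t₀ ≤ t → 0 ≤ h t := by
  intro t₁ ht₁
  by_contra hneg
  push_neg at hneg
  -- The set of points in [t₀, t₁] where h is nonnegative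
  set K : Set ℝ := {t | t ∈ Set.Icc t₀ t₁ ∧ 0 ≤ h t} with hK
  have hKne : K.Nonempty := ⟨t₀, ⟨Set.left_mem_Icc.2 ht₁, h0⟩⟩
  have hKbdd : BddAbove K := ⟨t₁, fun x hx => hx.1.2⟩
  have hKclosed : IsClosed K := by
    have : K = Set.Icc t₀ t₁ ∩ h ⁻¹' Set.Ici 0 := by
      ext x; simp [hK, Set.mem_preimage, and_comm]
    rw [this]
    exact ContinuousOn.preimage_isClosed_of_isClosed
      (hcont.mono (Set.Icc_subset_Ici_self)) isClosed_Icc isClosed_Ici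
  set τ := sSup K with hτdef
  have hτK : τ ∈ K := hKclosed.csSup_mem hKne hKbdd
  have hτ0 : t₀ ≤ τ := hτK.1.1
  have hτt₁ : τ ≤ t₁ := hτK.1.2
  have hhτ : 0 ≤ h τ := hτK.2
  have hτlt : τ < t₁ := by
    rcases lt_or_eq_of_le hτt₁ with hlt | heq
    · exact hlt
    · exact absurd (heq ▸ hhτ) (not_le.2 hneg)
  -- h is negative on (τ, t₁]
  have hnegOn : ∀ t ∈ Set.Ioc τ t₁, h t < 0 := by
    intro t ht
    by_contra hle
    push_neg at hle
    have : t ∈ K := ⟨⟨hτ0.trans ht.1.le, ht.2⟩, hle⟩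
    exact absurd (le_csSup hKbdd this) (not_le.2 ht.1)
  -- Apply the monotonicity lemma on [τ, t₁] with exceptional set the breakpoints
  have key : h τ ≤ h t₁ := by
    apply mono_except_aux (Finset.univ.image s).card (Finset.univ.image s) le_rfl
      h τ t₁ hτlt.le (hcont.mono fun x hx => hτ0.trans hx.1)
    intro x hx hxT
    have hxt0 : t₀ ≤ x := hτ0.trans hx.1.le
    have hxns : ∀ i, x ≠ s i := by
      intro i hxi
      exact hxT (Finset.mem_image.2 ⟨i, Finset.mem_univ i, hxi.symm⟩)
    obtain ⟨hdif, hder⟩ := hdiff x hxt0 hxns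
    refine ⟨hdif, ?_⟩
    have hxneg : h x < 0 := hnegOn x ⟨hx.1, hx.2.le⟩
    have hsign : Real.sign (h x) = -1 := Real.sign_of_neg hxneg
    have : -γ * Real.sign (h x) * |h x| ^ ρ = γ * |h x| ^ ρ := by
      rw [hsign]; ring
    rw [this] at hder
    have : 0 ≤ γ * |h x| ^ ρ :=
      mul_nonneg hγ.le (Real.rpow_nonneg (abs_nonneg _) ρ)
    linarith
  linarith
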